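/- arXiv:0802.2128 — 3 statements merged into one kernel-verified Lean document; each statement's English description precedes it below -/
import Mathlib

section
/- The collection of double suits over base set A and dimension N contains the constants 0, 1, and D_ij for all i, j < N, and is closed under the operations ¬, +_J, ·_J, and C_{n,J} for all J ⊆ Fin N and n < N; that is, if X and Y are double suits, then so are ¬X, X +_J Y, X ·_J Y, and C_{n,J}(X). -/
/-- A team: a set of valuations `Fin N → A`. -/
abbrev Team (A : Type*) (N : ℕ) := Set (Fin N → A)

/-- A pair of collections of teams. -/
abbrev TPair (A : Type*) (N : ℕ) := Set (Team A N) × Set (Team A N)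

/-- A suit: a nonempty collection of teams closed under subsets. -/
def IsSuit {A : Type*} {N : ℕ} (S : Set (Team A N)) : Prop :=
  S.Nonempty ∧ ∀ ⦃V V' : Team A N⦄, V ∈ S → V' ⊆ V → V' ∈ S

/-- A pair of suits. -/
def IsSuitPair {A : Type*} {N : ℕ} (X : TPair A N) : Prop :=
  IsSuit X.1 ∧ IsSuit X.2

/-- A double suit: a pair of suits whose intersection is `{∅}`. -/
def IsDoubleSuit {A : Type*} {N : ℕ} (X : TPair A N) : Prop :=
  IsSuit X.1 ∧ IsSuit X.2 ∧ X.1 ∩ X.2 = {∅}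

/-- `a ≈_J b` : the valuations `a` and `b` agree outside of `J`. -/
def AgreeOutside {A : Type*} {N : ℕ} (J : Set (Fin N)) (a b : Fin N → A) : Prop :=
  ∀ i ∉ J, a i = b i

/-- `V = V₁ ∪_J V₂` : `V₁, V₂` form a `J`-saturated disjoint cover of `V`. -/
def CovJ {A : Type*} {N : ℕ} (J : Set (Fin N)) (V V₁ V₂ : Team A N) : Prop :=
  Disjoint V₁ V₂ ∧ V₁ ∪ V₂ = V ∧
  (∀ a ∈ V₁, ∀ b ∈ V, AgreeOutside J a b → b ∈ V₁) ∧
  (∀ a ∈ V₂, ∀ b ∈ V, AgreeOutside J a b → b ∈ V₂)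

/-- `f` is independent of `J` on `V`. -/
def IndepOn {A : Type*} {N : ℕ} (J : Set (Fin N)) (V : Team A N)
    (f : (Fin N → A) → A) : Prop :=
  ∀ a ∈ V, ∀ b ∈ V, AgreeOutside J a b → f a = f b

/-- The constant `0 = ({∅}, 𝒫(^N A))`. -/
def zeroP (A : Type*) (N : ℕ) : TPair A N := ({∅}, Set.univ)

/-- The constant `1 = (𝒫(^N A), {∅})`. -/
def oneP (A : Type*) (N : ℕ) : TPair A N := (Set.univ, {∅})

/-- The diagonal element `D_ij`. -/
def diagP (A : Type*) {N : ℕ} (i j : Fin N) : TPair A N :=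
  (Set.powerset {a : Fin N → A | a i = a j}, Set.powerset {a : Fin N → A | a i ≠ a j})

/-- Negation: `¬(X⁺, X⁻) = (X⁻, X⁺)`. -/
def negP {A : Type*} {N : ℕ} (X : TPair A N) : TPair A N := (X.2, X.1)

/-- The operation `+_J`. -/
def addJ {A : Type*} {N : ℕ} (J : Set (Fin N)) (X Y : TPair A N) : TPair A N :=
  ({V | ∃ V₁ ∈ X.1, ∃ V₂ ∈ Y.1, CovJ J V V₁ V₂}, X.2 ∩ Y.2)

/-- The operation `·_J`. -/
def mulJ {A : Type*} {N : ℕ} (J : Set (Fin N)) (X Y : TPair A N) : TPair A N :=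
  (X.1 ∩ Y.1, {W | ∃ W₁ ∈ X.2, ∃ W₂ ∈ Y.2, CovJ J W W₁ W₂})

/-- The `n`-variation of `V` by `f`: `V(n:f) = {a(n:f(a)) : a ∈ V}`. -/
def varF {A : Type*} {N : ℕ} (V : Team A N) (n : Fin N) (f : (Fin N → A) → A) : Team A N :=
  (fun a => Function.update a n (f a)) '' V

/-- `V(n:A) = {a(n:b) : a ∈ V, b ∈ A}`. -/
def varAll {A : Type*} {N : ℕ} (V : Team A N) (n : Fin N) : Team A N :=
  {c | ∃ a ∈ V, ∃ b : A, c = Function.update a n b}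

/-- The cylindrification `C_{n,J}`. -/
def cylJ {A : Type*} {N : ℕ} (n : Fin N) (J : Set (Fin N)) (X : TPair A N) : TPair A N :=
  ({V | ∃ f : (Fin N → A) → A, IndepOn J V f ∧ varF V n f ∈ X.1}, {W | varAll W n ∈ X.2})


section Aux
variable {A : Type*} {N : ℕ}

lemma empty_mem_suit {S : Set (Team A N)} (h : IsSuit S) : ∅ ∈ S :=
  let ⟨V, hV⟩ := h.1; h.2 hV (Set.empty_subset V)

lemma isSuit_powerset (S : Team A N) : IsSuit (Set.powerset S) :=
  ⟨⟨∅, Set.empty_subset S⟩, fun _ _ h h' => h'.trans h⟩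

lemma isSuit_univ : IsSuit (Set.univ : Set (Team A N)) :=
  ⟨⟨∅, trivial⟩, fun _ _ _ _ => trivial⟩

lemma isSuit_singleton_empty : IsSuit ({∅} : Set (Team A N)) :=
  ⟨⟨∅, rfl⟩, fun V V' h h' => by
    simp only [Set.mem_singleton_iff] at *
    subst h; exact Set.subset_empty_iff.mp h'⟩

lemma isSuit_inter {S T : Set (Team A N)} (hS : IsSuit S) (hT : IsSuit T) :
    IsSuit (S ∩ T) :=
  ⟨⟨∅, empty_mem_suit hS, empty_mem_suit hT⟩,
   fun _ _ h h' => ⟨hS.2 h.1 h', hT.2 h.2 h'⟩⟩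

lemma ds_empty₁ {X : TPair A N} (h : IsDoubleSuit X) : ∅ ∈ X.1 :=
  empty_mem_suit h.1

lemma ds_empty₂ {X : TPair A N} (h : IsDoubleSuit X) : ∅ ∈ X.2 :=
  empty_mem_suit h.2.1

lemma covJ_empty (J : Set (Fin N)) : CovJ J (∅ : Team A N) ∅ ∅ := by
  refine ⟨disjoint_bot_left, by simp, ?_, ?_⟩ <;> intro a ha <;> exact absurd ha (by simp)

lemma covJ_restrict {J : Set (Fin N)} {V V₁ V₂ V' : Team A N}
    (h : CovJ J V V₁ V₂) (hsub : V' ⊆ V) : CovJ J V' (V₁ ∩ V') (V₂ ∩ V') := by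
  obtain ⟨hd, hu, h1, h2⟩ := h
  refine ⟨hd.mono Set.inter_subset_left Set.inter_subset_left, ?_, ?_, ?_⟩
  · rw [← Set.union_inter_distrib_right, hu]
    exact Set.inter_eq_self_of_subset_right hsub
  · rintro a ⟨ha1, ha'⟩ b hb hab
    exact ⟨h1 a ha1 b (hsub hb) hab, hb⟩
  · rintro a ⟨ha2, ha'⟩ b hb hab
    exact ⟨h2 a ha2 b (hsub hb) hab, hb⟩

lemma varF_mono {V V' : Team A N} {n : Fin N} {f : (Fin N → A) → A}
    (h : V' ⊆ V) : varF V' n f ⊆ varF V n f :=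
  Set.image_mono h

lemma varAll_mono {V V' : Team A N} {n : Fin N} (h : V' ⊆ V) :
    varAll V' n ⊆ varAll V n := by
  rintro c ⟨a, ha, b, rfl⟩; exact ⟨a, h ha, b, rfl⟩

lemma varF_subset_varAll (V : Team A N) (n : Fin N) (f : (Fin N → A) → A) :
    varF V n f ⊆ varAll V n := by
  rintro c ⟨a, ha, rfl⟩; exact ⟨a, ha, f a, rfl⟩

end Aux

/-- The double suits contain `0`, `1`, `D_ij` and are closed under
`¬`, `+_J`, `·_J`, and `C_{n,J}`. -/
theorem doubleSuits_closed (A : Type*) (N : ℕ) :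
    IsDoubleSuit (zeroP A N) ∧
    IsDoubleSuit (oneP A N) ∧
    (∀ i j : Fin N, IsDoubleSuit (diagP A i j)) ∧
    (∀ X : TPair A N, IsDoubleSuit X → IsDoubleSuit (negP X)) ∧
    (∀ (J : Set (Fin N)) (X Y : TPair A N),
      IsDoubleSuit X → IsDoubleSuit Y → IsDoubleSuit (addJ J X Y)) ∧
    (∀ (J : Set (Fin N)) (X Y : TPair A N),
      IsDoubleSuit X → IsDoubleSuit Y → IsDoubleSuit (mulJ J X Y)) ∧
    (∀ (n : Fin N) (J : Set (Fin N)) (X : TPair A N),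
      IsDoubleSuit X → IsDoubleSuit (cylJ n J X)) := by
  constructor
  · -- zeroP
    refine ⟨isSuit_singleton_empty, isSuit_univ, ?_⟩
    simp [zeroP, Set.inter_eq_self_of_subset_left, Set.subset_univ]
  constructor
  · -- oneP
    refine ⟨isSuit_univ, isSuit_singleton_empty, ?_⟩
    simp [oneP, Set.inter_eq_self_of_subset_right, Set.subset_univ]
  constructor
  · -- diagP
    intro i j
    refine ⟨isSuit_powerset _, isSuit_powerset _, ?_⟩
    ext V
    simp only [diagP, Set.mem_inter_iff, Set.mem_powerset_iff, Set.mem_singleton_iff]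
    constructor
    · rintro ⟨h1, h2⟩
      ext a
      simp only [Set.mem_empty_iff_false, iff_false]
      intro ha
      exact (h2 ha) (h1 ha)
    · rintro rfl; exact ⟨Set.empty_subset _, Set.empty_subset _⟩
  constructor
  · -- negP
    rintro X ⟨h1, h2, h3⟩
    exact ⟨h2, h1, by rw [negP]; rw [Set.inter_comm]; exact h3⟩
  constructor
  · -- addJ
    intro J X Y hX hY
    refine ⟨⟨⟨∅, ∅, ds_empty₁ hX, ∅, ds_empty₁ hY, covJ_empty J⟩, ?_⟩,
      isSuit_inter hX.2.1 hY.2.1, ?_⟩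
    · rintro V V' ⟨V₁, hV₁, V₂, hV₂, hcov⟩ hsub
      exact ⟨V₁ ∩ V', hX.1.2 hV₁ Set.inter_subset_left,
             V₂ ∩ V', hY.1.2 hV₂ Set.inter_subset_left, covJ_restrict hcov hsub⟩
    · ext V
      simp only [addJ, Set.mem_inter_iff, Set.mem_setOf_eq, Set.mem_singleton_iff]
      constructor
      · rintro ⟨⟨V₁, hV₁, V₂, hV₂, hd, hu, -⟩, hx2, hy2⟩
        have h1 : V₁ ∈ X.1 ∩ X.2 :=
          ⟨hV₁, hX.2.1.2 hx2 (hu ▸ Set.subset_union_left)⟩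
        have h2 : V₂ ∈ Y.1 ∩ Y.2 :=
          ⟨hV₂, hY.2.1.2 hy2 (hu ▸ Set.subset_union_right)⟩
        rw [hX.2.2] at h1; rw [hY.2.2] at h2
        rw [← hu, h1, h2, Set.union_empty]
      · rintro rfl
        exact ⟨⟨∅, ds_empty₁ hX, ∅, ds_empty₁ hY, covJ_empty J⟩,
               ds_empty₂ hX, ds_empty₂ hY⟩
  constructor
  · -- mulJ
    intro J X Y hX hY
    refine ⟨isSuit_inter hX.1 hY.1,
      ⟨⟨∅, ∅, ds_empty₂ hX, ∅, ds_empty₂ hY, covJ_empty J⟩, ?_⟩, ?_⟩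
    · rintro W W' ⟨W₁, hW₁, W₂, hW₂, hcov⟩ hsub
      exact ⟨W₁ ∩ W', hX.2.1.2 hW₁ Set.inter_subset_left,
             W₂ ∩ W', hY.2.1.2 hW₂ Set.inter_subset_left, covJ_restrict hcov hsub⟩
    · ext W
      simp only [mulJ, Set.mem_inter_iff, Set.mem_setOf_eq, Set.mem_singleton_iff]
      constructor
      · rintro ⟨⟨hx1, hy1⟩, W₁, hW₁, W₂, hW₂, hd, hu, -⟩
        have h1 : W₁ ∈ X.1 ∩ X.2 :=
          ⟨hX.1.2 hx1 (hu ▸ Set.subset_union_left), hW₁⟩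
        have h2 : W₂ ∈ Y.1 ∩ Y.2 :=
          ⟨hY.1.2 hy1 (hu ▸ Set.subset_union_right), hW₂⟩
        rw [hX.2.2] at h1; rw [hY.2.2] at h2
        rw [← hu, h1, h2, Set.union_empty]
      · rintro rfl
        exact ⟨⟨ds_empty₁ hX, ds_empty₁ hY⟩,
               ∅, ds_empty₂ hX, ∅, ds_empty₂ hY, covJ_empty J⟩
  · -- cylJ
    intro n J X hX
    have hfe : ∀ W : Team A N, varF W n (fun a => a n) = W := by
      intro W; unfold varF
      have : (fun a : Fin N → A => Function.update a n (a n)) = id := by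
        funext a; simp
      rw [this, Set.image_id]
    refine ⟨⟨⟨∅, (fun a => a n), ?_, ?_⟩, ?_⟩, ⟨⟨∅, ?_⟩, ?_⟩, ?_⟩
    · rintro a ha; exact absurd ha (by simp)
    · rw [hfe]; exact ds_empty₁ hX
    · rintro V V' ⟨f, hf, hmem⟩ hsub
      exact ⟨f, fun a ha b hb hab => hf a (hsub ha) b (hsub hb) hab,
        hX.1.2 hmem (varF_mono hsub)⟩
    · show varAll ∅ n ∈ X.2
      have : varAll (∅ : Team A N) n = ∅ := by
        ext c; simp [varAll]
      rw [this]; exact ds_empty₂ hX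
    · rintro W W' hW hsub
      exact hX.2.1.2 hW (varAll_mono hsub)
    · ext V
      simp only [cylJ, Set.mem_inter_iff, Set.mem_setOf_eq, Set.mem_singleton_iff]
      constructor
      · rintro ⟨⟨f, hf, hmem⟩, hvar⟩
        have h1 : varF V n f ∈ X.1 ∩ X.2 :=
          ⟨hmem, hX.2.1.2 hvar (varF_subset_varAll V n f)⟩
        rw [hX.2.2] at h1
        have := Set.image_eq_empty.mp h1
        exact this
      · rintro rfl
        refine ⟨⟨(fun a => a n), ?_, ?_⟩, ?_⟩
        · rintro a ha; exact absurd ha (by simp)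
        · rw [hfe]; exact ds_empty₁ hX
        · show varAll ∅ n ∈ X.2
          have : varAll (∅ : Team A N) n = ∅ := by ext c; simp [varAll]
          rw [this]; exact ds_empty₂ hX
end

section
/- Let φ be a perfect IFG_N-formula over σ (every slash set occurring in φ is ∅) and 𝔄 a σ-structure with universe A. Then for every team W ⊆ ^N A, 𝔄 ⊨⁻ φ[W] if and only if 𝔄 ⊨⁻ φ[{b}] for every b ∈ W. -/
open FirstOrder

/-- The pair `(𝒫(V), 𝒫(^N A \ V))`. -/
def perfPair {A : Type*} {N : ℕ} (V : Team A N) : TPair A N :=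
  (Set.powerset V, Set.powerset Vᶜ)

/-- IFG_N-formulas over the signature `L`: atomic first-order formulas
(equalities and relations between terms in the variables `v_0, …, v_{N-1}`),
closed under `∼ψ`, `ψ₁ ∨_J ψ₂`, and `∃v_n/J ψ`. -/
inductive IFG (L : Language) (N : ℕ) : Type _
  | equal (t₁ t₂ : L.Term (Fin N)) : IFG L N
  | rel {k : ℕ} (R : L.Relations k) (ts : Fin k → L.Term (Fin N)) : IFG L N
  | not (φ : IFG L N) : IFG L N
  | or (J : Set (Fin N)) (φ₁ φ₂ : IFG L N) : IFG L N
  | ex (n : Fin N) (J : Set (Fin N)) (φ : IFG L N) : IFG L N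

/-- Hodges' trump semantics: `Sat A φ true V` means `𝔄 ⊨⁺ φ[V]` (`V` is a trump),
and `Sat A φ false W` means `𝔄 ⊨⁻ φ[W]` (`W` is a cotrump). -/
def Sat {L : Language} {N : ℕ} (A : Type*) [L.Structure A] :
    IFG L N → Bool → Team A N → Prop
  | .equal t₁ t₂, true, V => ∀ a ∈ V, t₁.realize a = t₂.realize a
  | .equal t₁ t₂, false, W => ∀ a ∈ W, t₁.realize a ≠ t₂.realize a
  | .rel R ts, true, V => ∀ a ∈ V, Language.Structure.RelMap R (fun i => (ts i).realize a)
  | .rel R ts, false, W => ∀ a ∈ W, ¬ Language.Structure.RelMap R (fun i => (ts i).realize a)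
  | .not φ, b, V => Sat A φ (!b) V
  | .or J φ₁ φ₂, true, V =>
      ∃ V₁ V₂, CovJ J V V₁ V₂ ∧ Sat A φ₁ true V₁ ∧ Sat A φ₂ true V₂
  | .or _ φ₁ φ₂, false, W => Sat A φ₁ false W ∧ Sat A φ₂ false W
  | .ex n J φ, true, V =>
      ∃ f : (Fin N → A) → A, IndepOn J V f ∧ Sat A φ true (varF V n f)
  | .ex n _ φ, false, W => Sat A φ false (varAll W n)

/-- The meaning `‖φ‖_𝔄 = ({V : 𝔄 ⊨⁺ φ[V]}, {W : 𝔄 ⊨⁻ φ[W]})`. -/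
def meaning {L : Language} {N : ℕ} (A : Type*) [L.Structure A] (φ : IFG L N) :
    TPair A N :=
  ({V | Sat A φ true V}, {W | Sat A φ false W})

/-- An IFG-formula is perfect if all of its slash sets are empty. -/
def IFG.Perfect {L : Language} {N : ℕ} : IFG L N → Prop
  | .equal _ _ => True
  | .rel _ _ => True
  | .not φ => φ.Perfect
  | .or J φ₁ φ₂ => J = ∅ ∧ φ₁.Perfect ∧ φ₂.Perfect
  | .ex _ J φ => J = ∅ ∧ φ.Perfect

/-- The perfection `φ_∅` of `φ`: replace every slash set by `∅`. -/
def IFG.perfection {L : Language} {N : ℕ} : IFG L N → IFG L N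
  | .equal t₁ t₂ => .equal t₁ t₂
  | .rel R ts => .rel R ts
  | .not φ => .not φ.perfection
  | .or _ φ₁ φ₂ => .or ∅ φ₁.perfection φ₂.perfection
  | .ex n _ φ => .ex n ∅ φ.perfection

lemma agreeOutside_empty {A : Type*} {N : ℕ} {a b : Fin N → A} :
    AgreeOutside (∅ : Set (Fin N)) a b ↔ a = b := by
  constructor
  · intro h; funext i; exact h i (Set.notMem_empty i)
  · rintro rfl i _; rfl

lemma indepOn_empty {A : Type*} {N : ℕ} (V : Team A N) (f : (Fin N → A) → A) :
    IndepOn (∅ : Set (Fin N)) V f := by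
  intro a _ b _ hab
  rw [agreeOutside_empty.1 hab]

lemma flat_aux {L : Language} {N : ℕ} (A : Type*) [L.Structure A]
    (φ : IFG L N) (hφ : φ.Perfect) :
    ∀ (s : Bool) (W : Team A N), Sat A φ s W ↔ ∀ a ∈ W, Sat A φ s {a} := by
  classical
  induction φ with
  | equal t₁ t₂ => intro s W; cases s <;> simp [Sat]
  | rel R ts => intro s W; cases s <;> simp [Sat]
  | not φ ih =>
    intro s W
    exact ih hφ (!s) W
  | or J φ₁ φ₂ ih₁ ih₂ =>
    obtain ⟨hJ, h1, h2⟩ := hφ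
    subst hJ
    intro s W
    cases s with
    | false =>
      show (Sat A φ₁ false W ∧ Sat A φ₂ false W) ↔ _
      rw [ih₁ h1, ih₂ h2]
      constructor
      · rintro ⟨p, q⟩ a ha; exact ⟨p a ha, q a ha⟩
      · intro h; exact ⟨fun a ha => (h a ha).1, fun a ha => (h a ha).2⟩
    | true =>
      show (∃ V₁ V₂, CovJ ∅ W V₁ V₂ ∧ Sat A φ₁ true V₁ ∧ Sat A φ₂ true V₂) ↔ _
      constructor
      · rintro ⟨V₁, V₂, ⟨hd, hu, _, _⟩, s₁, s₂⟩ a ha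
        have ha' : a ∈ V₁ ∪ V₂ := hu ▸ ha
        cases ha' with
        | inl h =>
          refine ⟨{a}, ∅, ?_, (ih₁ h1 true V₁).1 s₁ a h, (ih₂ h2 true ∅).2 (by simp)⟩
          exact ⟨by simp, by simp, fun x hx b hb hab => hb, fun x hx => hx.elim⟩
        | inr h =>
          refine ⟨∅, {a}, ?_, (ih₁ h1 true ∅).2 (by simp), (ih₂ h2 true V₂).1 s₂ a h⟩
          exact ⟨by simp, by simp, fun x hx => hx.elim, fun x hx b hb hab => hb⟩
      · intro h
        refine ⟨{a ∈ W | Sat A φ₁ true {a}}, {a ∈ W | ¬ Sat A φ₁ true {a}}, ?_, ?_, ?_⟩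
        · refine ⟨?_, ?_, ?_, ?_⟩
          · rw [Set.disjoint_left]; rintro x ⟨_, hx⟩ ⟨_, hx'⟩; exact hx' hx
          · ext x; by_cases hx : Sat A φ₁ true {x} <;> simp [hx]
          · rintro x hx b hb hab; rw [← agreeOutside_empty.1 hab]; exact hx
          · rintro x hx b hb hab; rw [← agreeOutside_empty.1 hab]; exact hx
        · exact (ih₁ h1 true _).2 (fun a ha => ha.2)
        · refine (ih₂ h2 true _).2 (fun a ha => ?_)
          obtain ⟨V₁, V₂, ⟨hd, hu, _, _⟩, s₁, s₂⟩ := h a ha.1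
          have ha' : a ∈ V₁ ∪ V₂ := hu ▸ rfl
          cases ha' with
          | inl hm =>
            exact absurd ((ih₁ h1 true V₁).1 s₁ a hm) ha.2
          | inr hm =>
            exact (ih₂ h2 true V₂).1 s₂ a hm
  | ex n J φ ih =>
      obtain ⟨hJ, h1⟩ := hφ
      subst hJ
      intro s W
      cases s with
      | false =>
        show Sat A φ false (varAll W n) ↔ _
        rw [ih h1]
        constructor
        · intro h a ha
          show Sat A φ false (varAll {a} n)
          rw [ih h1]
          rintro c ⟨x, hx, b, rfl⟩
          exact h _ ⟨x, hx ▸ ha, b, rfl⟩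
        · rintro h c ⟨x, hx, b, rfl⟩
          have := h x hx
          rw [show Sat A (IFG.ex n ∅ φ) false {x} = Sat A φ false (varAll {x} n) from rfl,
            ih h1] at this
          exact this _ ⟨x, rfl, b, rfl⟩
      | true =>
        show (∃ f, IndepOn ∅ W f ∧ Sat A φ true (varF W n f)) ↔ _
        constructor
        · rintro ⟨f, _, hs⟩ a ha
          refine ⟨f, indepOn_empty _ _, ?_⟩
          refine (ih h1 true _).2 ?_
          rintro c ⟨x, hx, rfl⟩
          obtain rfl := Set.eq_of_mem_singleton hx
          exact (ih h1 true _).1 hs _ ⟨x, ha, rfl⟩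
        · intro h
          choose f hf hs using fun a (ha : a ∈ W) => h a ha
          by_cases hW : W.Nonempty
          · obtain ⟨a₀, ha₀⟩ := hW
            refine ⟨fun a => if ha : a ∈ W then f a ha a else f a₀ ha₀ a₀,
              indepOn_empty _ _, ?_⟩
            refine (ih h1 true _).2 ?_
            rintro c ⟨x, hx, rfl⟩
            simp only [hx, dif_pos]
            have := (ih h1 true _).1 (hs x hx) (Function.update x n (f x hx x))
              ⟨x, rfl, rfl⟩
            exact this
          · rw [Set.not_nonempty_iff_eq_empty] at hW
            subst hW
            have hf : Nonempty ((Fin N → A) → A) := by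
              rcases isEmpty_or_nonempty A with hA | hA
              · exact ⟨fun x => hA.elim (x n)⟩
              · exact ⟨fun _ => Classical.choice hA⟩
            obtain ⟨f⟩ := hf
            refine ⟨f, indepOn_empty _ _, (ih h1 true _).2 ?_⟩
            rintro c ⟨x, hx, rfl⟩
            exact hx.elim

/-- For perfect IFG-formulas: `𝔄 ⊨⁻ φ[W]` iff `𝔄 ⊨⁻ φ[{b}]` for all `b ∈ W`. -/
theorem perfect_flat_neg {L : Language} {N : ℕ} (A : Type*) [L.Structure A]
    (φ : IFG L N) (hφ : φ.Perfect) (W : Team A N) :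
    Sat A φ false W ↔ ∀ b ∈ W, Sat A φ false {b} :=
  flat_aux A φ hφ false W
end

section
/- Let φ be a perfect IFG_N-formula over σ (every slash set occurring in φ is ∅) and 𝔄 a σ-structure with universe A. Then the meaning ‖φ‖_𝔄 is a perfect double suit: there is a team V ⊆ ^N A such that ‖φ‖_𝔄 = (𝒫(V), 𝒫(^N A \ V)). -/
open FirstOrder

/-- Pointwise (Tarskian) satisfaction. -/
def tsat {L : Language} {N : ℕ} (A : Type*) [L.Structure A] :
    IFG L N → (Fin N → A) → Prop
  | .equal t₁ t₂, a => t₁.realize a = t₂.realize a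
  | .rel R ts, a => Language.Structure.RelMap R (fun i => (ts i).realize a)
  | .not φ, a => ¬ tsat A φ a
  | .or _ φ₁ φ₂, a => tsat A φ₁ a ∨ tsat A φ₂ a
  | .ex n _ φ, a => ∃ b, tsat A φ (Function.update a n b)

lemma agree_empty {A : Type*} {N : ℕ} {a b : Fin N → A}
    (h : AgreeOutside (∅ : Set (Fin N)) a b) : a = b :=
  funext fun i => h i (Set.notMem_empty i)

lemma flat {L : Language} {N : ℕ} (A : Type*) [L.Structure A] (φ : IFG L N)
    (hφ : φ.Perfect) :
    (∀ V : Team A N, Sat A φ true V ↔ ∀ a ∈ V, tsat A φ a) ∧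
    (∀ W : Team A N, Sat A φ false W ↔ ∀ a ∈ W, ¬ tsat A φ a) := by
  induction φ with
  | equal t₁ t₂ => exact ⟨fun V => Iff.rfl, fun W => Iff.rfl⟩
  | rel R ts => exact ⟨fun V => Iff.rfl, fun W => Iff.rfl⟩
  | not φ ih =>
    obtain ⟨ih₁, ih₂⟩ := ih hφ
    exact ⟨fun V => (ih₂ V).trans (by simp [tsat]),
           fun W => (ih₁ W).trans (by simp [tsat])⟩
  | or J φ₁ φ₂ ih₁ ih₂ =>
    obtain ⟨hJ, h₁, h₂⟩ := hφ
    subst hJ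
    obtain ⟨ih₁p, ih₁n⟩ := ih₁ h₁
    obtain ⟨ih₂p, ih₂n⟩ := ih₂ h₂
    constructor
    · intro V
      constructor
      · rintro ⟨V₁, V₂, ⟨_, hu, _, _⟩, s₁, s₂⟩ a ha
        rw [← hu] at ha
        rcases ha with ha | ha
        · exact Or.inl ((ih₁p V₁).mp s₁ a ha)
        · exact Or.inr ((ih₂p V₂).mp s₂ a ha)
      · intro h
        refine ⟨{a ∈ V | tsat A φ₁ a}, {a ∈ V | ¬ tsat A φ₁ a}, ⟨?_, ?_, ?_, ?_⟩, ?_, ?_⟩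
        · rw [Set.disjoint_left]; rintro a ⟨_, ha⟩ ⟨_, ha'⟩; exact ha' ha
        · ext a
          constructor
          · rintro (⟨ha, _⟩ | ⟨ha, _⟩) <;> exact ha
          · intro ha
            by_cases h' : tsat A φ₁ a
            · exact Or.inl ⟨ha, h'⟩
            · exact Or.inr ⟨ha, h'⟩
        · rintro a ⟨haV, ha⟩ b hb hab; rw [← agree_empty hab]; exact ⟨haV, ha⟩
        · rintro a ⟨haV, ha⟩ b hb hab; rw [← agree_empty hab]; exact ⟨haV, ha⟩
        · exact (ih₁p _).mpr (fun a ha => ha.2)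
        · refine (ih₂p _).mpr (fun a ha => ?_)
          rcases h a ha.1 with h' | h'
          · exact absurd h' ha.2
          · exact h'
    · intro W
      rw [show (Sat A (.or ∅ φ₁ φ₂) false W) =
          (Sat A φ₁ false W ∧ Sat A φ₂ false W) from rfl, ih₁n W, ih₂n W]
      constructor
      · rintro ⟨hA, hB⟩ a ha h
        rcases h with h | h
        · exact hA a ha h
        · exact hB a ha h
      · intro h
        exact ⟨fun a ha h' => h a ha (Or.inl h'), fun a ha h' => h a ha (Or.inr h')⟩
  | ex n J φ ih =>
    obtain ⟨hJ, h₁⟩ := hφ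
    subst hJ
    obtain ⟨ihp, ihn⟩ := ih h₁
    constructor
    · intro V
      constructor
      · rintro ⟨f, _, hs⟩ a ha
        exact ⟨f a, (ihp _).mp hs _ ⟨a, ha, rfl⟩⟩
      · intro h
        classical
        refine ⟨fun a => if hb : ∃ b, tsat A φ (Function.update a n b)
            then hb.choose else a n, ?_, ?_⟩
        · intro a _ b _ hab; rw [agree_empty hab]
        · refine (ihp _).mpr ?_
          rintro c ⟨a, ha, rfl⟩
          have hb : ∃ b, tsat A φ (Function.update a n b) := h a ha
          simp only [dif_pos hb]
          exact hb.choose_spec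
    · intro W
      rw [show (Sat A (.ex n ∅ φ) false W) = Sat A φ false (varAll W n) from rfl,
        ihn]
      constructor
      · rintro h a ha ⟨b, hb⟩
        exact h _ ⟨a, ha, b, rfl⟩ hb
      · rintro h c ⟨a, ha, b, rfl⟩ hb
        exact h a ha ⟨b, hb⟩

/-- The meaning of a perfect IFG-formula is a perfect double suit:
`‖φ‖_𝔄 = (𝒫(V), 𝒫(^N A \ V))` for some team `V`. -/
theorem perfect_formula_perfect_meaning {L : Language} {N : ℕ} (A : Type*)
    [L.Structure A] (φ : IFG L N) (hφ : φ.Perfect) :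
    ∃ V : Team A N, meaning A φ = perfPair V := by
  obtain ⟨hp, hn⟩ := flat A φ hφ
  refine ⟨{a | tsat A φ a}, ?_⟩
  unfold meaning perfPair
  congr 1
  · ext V
    simp only [Set.mem_setOf_eq, Set.mem_powerset_iff, Set.subset_def]
    exact hp V
  · ext W
    simp only [Set.mem_setOf_eq, Set.mem_powerset_iff, Set.subset_def,
      Set.mem_compl_iff]
    exact hn W
end
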